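/- With T as above, the image p(SU(2) × SU(2)) under p(A, B) = T(A⊗B)T† is contained in SO(4,ℂ) ∩ U(4) = SO(4,ℝ); in particular T(A⊗B)T† is a real orthogonal matrix for all A, B ∈ SU(2). -/

import Mathlib

open Matrix Complex
noncomputable section

/-- Kronecker product of 2×2 matrices as a 4×4 matrix, via `|i⟩|j⟩ ↦ |2i+j⟩`. -/
def kron (A B : Matrix (Fin 2) (Fin 2) ℂ) : Matrix (Fin 4) (Fin 4) ℂ :=
  Matrix.of fun i j =>
    A ⟨i.val / 2, by have := i.isLt; omega⟩ ⟨j.val / 2, by have := j.isLt; omega⟩ *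
      B ⟨i.val % 2, by have := i.isLt; omega⟩ ⟨j.val % 2, by have := j.isLt; omega⟩

/-- The unitary matrix `T` from the paper. -/
def Tmat : Matrix (Fin 4) (Fin 4) ℂ :=
  (Real.sqrt 2 : ℂ)⁻¹ • !![1, 0, 0, 1; 0, I, I, 0; 0, -1, 1, 0; I, 0, 0, -I]

lemma kron_ex (A B : Matrix (Fin 2) (Fin 2) ℂ) : kron A B =
    !![A 0 0*B 0 0, A 0 0*B 0 1, A 0 1*B 0 0, A 0 1*B 0 1;
       A 0 0*B 1 0, A 0 0*B 1 1, A 0 1*B 1 0, A 0 1*B 1 1;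
       A 1 0*B 0 0, A 1 0*B 0 1, A 1 1*B 0 0, A 1 1*B 0 1;
       A 1 0*B 1 0, A 1 0*B 1 1, A 1 1*B 1 0, A 1 1*B 1 1] := by
  ext i j; fin_cases i <;> fin_cases j <;> rfl

lemma kron_mul (A B C D : Matrix (Fin 2) (Fin 2) ℂ) :
    kron A B * kron C D = kron (A*C) (B*D) := by
  have h2 : ∀ (X Y : Matrix (Fin 2) (Fin 2) ℂ) i j, (X*Y) i j = X i 0 * Y 0 j + X i 1 * Y 1 j := by
    intro X Y i j; simp [Matrix.mul_apply, Fin.sum_univ_two]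
  rw [kron_ex A B, kron_ex C D, kron_ex (A*C) (B*D)]
  ext i j
  fin_cases i <;> fin_cases j <;>
    simp [Matrix.mul_apply, Fin.sum_univ_four, h2] <;> ring

lemma kron_conjT (A B : Matrix (Fin 2) (Fin 2) ℂ) : (kron A B)ᴴ = kron Aᴴ Bᴴ := by
  ext i j
  simp [kron, Matrix.conjTranspose_apply, mul_comm]

lemma kron_one : kron 1 1 = 1 := by
  rw [kron_ex]; ext i j; fin_cases i <;> fin_cases j <;> simp [Matrix.one_apply, vecHead, vecTail]

lemma kron_map (A B : Matrix (Fin 2) (Fin 2) ℂ) :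
    (kron A B).map (starRingEnd ℂ) = kron (A.map (starRingEnd ℂ)) (B.map (starRingEnd ℂ)) := by
  ext i j; simp [kron]

def Emat : Matrix (Fin 4) (Fin 4) ℂ := !![0,0,0,1; 0,0,-1,0; 0,-1,0,0; 1,0,0,0]

lemma sqrt2_sq : ((Real.sqrt 2 : ℂ))⁻¹ * (Real.sqrt 2 : ℂ)⁻¹ = 2⁻¹ := by
  have h : (Real.sqrt 2 : ℂ) * (Real.sqrt 2 : ℂ) = 2 := by
    norm_cast
    exact Real.mul_self_sqrt (by norm_num)
  rw [← mul_inv, h]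

lemma T_mul_Tc : Tmat * Tmatᴴ = 1 := by
  ext i j
  fin_cases i <;> fin_cases j <;>
    simp [Tmat, Matrix.mul_apply, Fin.sum_univ_four, Matrix.one_apply, vecHead, vecTail,
      Complex.ext_iff] <;>
    norm_num [sqrt2_sq, Complex.ext_iff, div_mul_div_comm, Real.mul_self_sqrt]

lemma Tc_mul_T : Tmatᴴ * Tmat = 1 := by
  ext i j
  fin_cases i <;> fin_cases j <;>
    simp [Tmat, Matrix.mul_apply, Fin.sum_univ_four, Matrix.one_apply, vecHead, vecTail,
      Complex.ext_iff] <;>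
    norm_num [sqrt2_sq, Complex.ext_iff, div_mul_div_comm, Real.mul_self_sqrt]

lemma Tconj_mul_E : Tmat.map (starRingEnd ℂ) * Emat = Tmat := by
  ext i j
  fin_cases i <;> fin_cases j <;>
    simp [Tmat, Emat, Matrix.mul_apply, Fin.sum_univ_four, vecHead, vecTail]

lemma E_mul_E : Emat * Emat = 1 := by
  ext i j
  fin_cases i <;> fin_cases j <;>
    simp [Emat, Matrix.mul_apply, Fin.sum_univ_four, Matrix.one_apply, vecHead, vecTail]

def eps : Matrix (Fin 2) (Fin 2) ℂ := !![0,1;-1,0]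

lemma map_conj_su2 (A : Matrix (Fin 2) (Fin 2) ℂ) (hAu : Aᴴ * A = 1) (hA : A.det = 1) :
    A.map (starRingEnd ℂ) = eps * A * epsᵀ := by
  have h1 : A * A.adjugate = 1 := by rw [Matrix.mul_adjugate, hA, one_smul]
  have hadj : Aᴴ = A.adjugate := by
    calc Aᴴ = Aᴴ * (A * A.adjugate) := by rw [h1, mul_one]
    _ = (Aᴴ * A) * A.adjugate := by rw [mul_assoc]
    _ = A.adjugate := by rw [hAu, one_mul]
  ext i j
  have h2 := congrFun (congrFun hadj j) i
  rw [Matrix.conjTranspose_apply, Matrix.adjugate_fin_two] at h2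
  fin_cases i <;> fin_cases j <;>
    simp_all [eps, Matrix.mul_apply, Matrix.vecMul, dotProduct, Fin.sum_univ_two, vecHead, vecTail]

lemma Emat_eq : Emat = kron eps eps := by
  rw [kron_ex]; ext i j; fin_cases i <;> fin_cases j <;> simp [Emat, eps, vecHead, vecTail]

lemma kron_det (A B : Matrix (Fin 2) (Fin 2) ℂ) (hA : A.det = 1) (hB : B.det = 1) :
    (kron A B).det = 1 := by
  rw [Matrix.det_fin_two] at hA hB
  rw [kron_ex]
  simp [Matrix.det_succ_row_zero, Fin.sum_univ_succ, Matrix.det_fin_two, vecHead, vecTail,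
    Fin.succAbove, Fin.castSucc, Fin.castAdd, Fin.castLE, Matrix.cons_val_succ]
  linear_combination ((A 0 0 * A 1 1 - A 0 1 * A 1 0 + 1) *
      (B 0 0 * B 1 1 - B 0 1 * B 1 0)^2) * hA +
    (B 0 0 * B 1 1 - B 0 1 * B 1 0 + 1) * hB

lemma kron_epsT : kron epsᵀ epsᵀ = Emat := by
  rw [kron_ex]; ext i j
  fin_cases i <;> fin_cases j <;> simp [Emat, eps, vecHead, vecTail]

lemma T_mul_E : Tmat * Emat = Tmat.map (starRingEnd ℂ) := by
  calc Tmat * Emat = (Tmat.map (starRingEnd ℂ) * Emat) * Emat := by rw [Tconj_mul_E]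
  _ = Tmat.map (starRingEnd ℂ) * (Emat * Emat) := by rw [Matrix.mul_assoc]
  _ = Tmat.map (starRingEnd ℂ) := by rw [E_mul_E, mul_one]

/-- For `A, B ∈ SU(2)`, `T(A⊗B)T†` lies in `SO(4,ℂ) ∩ U(4) = SO(4,ℝ)`:
it is orthogonal of determinant 1, unitary, and has real entries. -/
theorem stmt_9 (A B : Matrix (Fin 2) (Fin 2) ℂ)
    (hAu : Aᴴ * A = 1) (hA : A.det = 1) (hBu : Bᴴ * B = 1) (hB : B.det = 1) :
    (Tmat * kron A B * Tmatᴴ)ᵀ * (Tmat * kron A B * Tmatᴴ) = 1 ∧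
      (Tmat * kron A B * Tmatᴴ).det = 1 ∧
      (Tmat * kron A B * Tmatᴴ)ᴴ * (Tmat * kron A B * Tmatᴴ) = 1 ∧
      ∀ i j, ((Tmat * kron A B * Tmatᴴ) i j).im = 0 := by

  have hK : (kron A B)ᴴ * kron A B = 1 := by
    rw [kron_conjT, kron_mul, hAu, hBu, kron_one]
  have hU : (Tmat * kron A B * Tmatᴴ)ᴴ * (Tmat * kron A B * Tmatᴴ) = 1 := by
    simp only [Matrix.conjTranspose_mul, Matrix.conjTranspose_conjTranspose, Matrix.mul_assoc]
    rw [← Matrix.mul_assoc Tmatᴴ Tmat, Tc_mul_T, Matrix.one_mul,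
      ← Matrix.mul_assoc (kron A B)ᴴ, hK, Matrix.one_mul, T_mul_Tc]
  have hTh : Tmatᴴ = (Tmat.map (starRingEnd ℂ))ᵀ := by
    ext i j; simp [Matrix.conjTranspose_apply]
  have hcc : Tmatᴴ.map (starRingEnd ℂ) = Tmatᵀ := by
    ext i j; simp [Matrix.conjTranspose_apply, Matrix.map_apply]
  have hEs : Ematᵀ = Emat := by
    ext i j; fin_cases i <;> fin_cases j <;> simp [Emat, vecHead, vecTail]
  have hreal : (Tmat * kron A B * Tmatᴴ).map (starRingEnd ℂ) = Tmat * kron A B * Tmatᴴ := by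
    calc (Tmat * kron A B * Tmatᴴ).map (starRingEnd ℂ)
        = Tmat.map (starRingEnd ℂ) * (kron A B).map (starRingEnd ℂ) *
          (Tmatᴴ).map (starRingEnd ℂ) := by simp [Matrix.map_mul]
      _ = Tmat.map (starRingEnd ℂ) * (kron (eps*A*epsᵀ) (eps*B*epsᵀ)) * Tmatᵀ := by
          rw [kron_map, map_conj_su2 A hAu hA, map_conj_su2 B hBu hB, hcc]
      _ = Tmat.map (starRingEnd ℂ) * (Emat * kron A B * Emat) * Tmatᵀ := by
          rw [← kron_mul, ← kron_mul, kron_epsT, ← Emat_eq]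
      _ = (Tmat.map (starRingEnd ℂ) * Emat) * kron A B * (Emat * Tmatᵀ) := by
          simp only [Matrix.mul_assoc]
      _ = Tmat * kron A B * Tmatᴴ := by
          rw [Tconj_mul_E, hTh]
          congr 1
          calc Emat * Tmatᵀ = (Tmat * Ematᵀ)ᵀ := by rw [Matrix.transpose_mul, Matrix.transpose_transpose]
          _ = (Tmat.map (starRingEnd ℂ))ᵀ := by rw [hEs, T_mul_E]
  have him : ∀ i j, (starRingEnd ℂ) ((Tmat * kron A B * Tmatᴴ) i j) =
      (Tmat * kron A B * Tmatᴴ) i j := fun i j => congrFun (congrFun hreal i) j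
  have hTeq : (Tmat * kron A B * Tmatᴴ)ᵀ = (Tmat * kron A B * Tmatᴴ)ᴴ := by
    ext i j; rw [Matrix.transpose_apply, Matrix.conjTranspose_apply]; exact (him j i).symm
  refine ⟨by rw [hTeq]; exact hU, ?_, hU, fun i j => Complex.conj_eq_iff_im.mp (him i j)⟩
  rw [Matrix.det_mul, Matrix.det_mul, kron_det A B hA hB, mul_one, ← Matrix.det_mul,
    T_mul_Tc, Matrix.det_one]
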